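/- For the coherent-state quantization A_{z z̄} = ∫ |z|² |z⟩⟨z| dμ(z̄,z) (with the measure resolving the identity), one obtains A_{z z̄} = a a† = φ(N+1), i.e. A_{z z̄}|n⟩ = φ(n+1)|n⟩; consequently the spectrum of the quantized |z|² is {φ(n+1) : n ≥ 0}. Equivalently, given the resolution of identity ∫ dμ |z⟩⟨z| = 1 with diagonal matrix elements ∫ dμ |z|² ⟨n|z⟩⟨z|n'⟩ determined by moments ∫ dμ |z|^{2k} N(|z|²)^{−1} = γ^k q^{−k(k−1)/2}(q;q)_k, prove that the operator with matrix elements ∫ dμ |z|² ⟨n|z⟩⟨z|n'⟩ is diagonal with eigenvalue φ(n+1) on |n⟩. -/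

import Mathlib

open MeasureTheory

theorem stmt19 (l lam q : ℝ) (hl : l ≠ 0) (hq0 : 0 < q) (hq1 : q < 1)
    (γ : ℝ) (hγ : γ = l ^ 2 * q ^ (lam - 1) / (1 - q))
    (φ : ℕ → ℝ)
    (hφ : ∀ j : ℕ, φ j = l ^ 2 * q ^ lam * (1 - q ^ (-(j : ℝ))) / (q - 1))
    (qp : ℕ → ℝ) (hqp : ∀ n : ℕ, qp n = ∏ k ∈ Finset.range n, (1 - q ^ (k + 1)))
    (Nf : ℝ → ℝ)
    (hN : ∀ t : ℝ, Nf t = ∑' n : ℕ, q ^ (n * (n - 1) / 2) * t ^ n / (γ ^ n * qp n))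
    (c : ℕ → ℝ)
    (hc : ∀ n : ℕ, c n = q ^ ((n * (n - 1) : ℝ) / 4) * (Real.sqrt (γ ^ n * qp n))⁻¹)
    (h : ℝ → ℝ) (hh : ∀ t, 0 ≤ h t)
    (μ : Measure ℂ)
    (hμ : μ = volume.withDensity (fun z => ENNReal.ofReal (h (‖z‖ ^ 2))))
    (hmom : ∀ k : ℕ,
      (∫ z : ℂ, ‖z‖ ^ (2 * k) / Nf (‖z‖ ^ 2) ∂μ)
        = γ ^ k * (q ^ (k * (k - 1) / 2))⁻¹ * qp k) :
    ∀ n n' : ℕ,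
      (∫ z : ℂ, ((‖z‖ ^ 2 : ℝ) : ℂ) * ((c n : ℝ) : ℂ) * z ^ n *
          (starRingEnd ℂ) (((c n' : ℝ) : ℂ) * z ^ n') /
          ((Nf (‖z‖ ^ 2) : ℝ) : ℂ) ∂μ)
        = if n = n' then ((φ (n + 1) : ℝ) : ℂ) else 0 := by
  have hq1' : (0:ℝ) < 1 - q := by linarith
  have hγpos : 0 < γ := by
    rw [hγ]
    have : (0:ℝ) < l ^ 2 := by positivity
    positivity
  have hqppos : ∀ m, 0 < qp m := by
    intro m
    rw [hqp]
    apply Finset.prod_pos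
    intro k _
    have : q ^ (k + 1) < 1 := pow_lt_one₀ hq0.le hq1 (Nat.succ_ne_zero k)
    linarith
  intro n n'
  by_cases hnn : n = n'
  · -- diagonal case
    subst hnn
    rw [if_pos rfl]
    have hint : ∀ z : ℂ,
        ((‖z‖ ^ 2 : ℝ) : ℂ) * ((c n : ℝ) : ℂ) * z ^ n *
          (starRingEnd ℂ) (((c n : ℝ) : ℂ) * z ^ n) /
          ((Nf (‖z‖ ^ 2) : ℝ) : ℂ)
        = ((c n ^ 2 : ℝ) : ℂ) *
            ((‖z‖ ^ (2 * (n + 1)) / Nf (‖z‖ ^ 2) : ℝ) : ℂ) := by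
      intro z
      have h0 : z ^ n * (starRingEnd ℂ) z ^ n = (((‖z‖ : ℝ) : ℂ)) ^ (2 * n) := by
        calc z ^ n * (starRingEnd ℂ) z ^ n = (z * (starRingEnd ℂ) z) ^ n := (mul_pow _ _ _).symm
        _ = ((Complex.normSq z : ℝ) : ℂ) ^ n := by rw [Complex.mul_conj]
        _ = _ := by rw [← Complex.sq_norm]; push_cast [pow_mul]; ring
      have h2 : ((‖z‖ ^ 2 : ℝ) : ℂ) * ((c n : ℝ) : ℂ) * z ^ n *
          (starRingEnd ℂ) (((c n : ℝ) : ℂ) * z ^ n)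
          = ((c n ^ 2 * ‖z‖ ^ (2 * (n + 1)) : ℝ) : ℂ) := by
        rw [map_mul, map_pow, Complex.conj_ofReal]
        push_cast
        linear_combination (((‖z‖ : ℝ) : ℂ) ^ 2 * ((c n : ℝ) : ℂ) ^ 2) * h0
      rw [h2]
      push_cast
      ring
    calc (∫ z : ℂ, ((‖z‖ ^ 2 : ℝ) : ℂ) * ((c n : ℝ) : ℂ) * z ^ n *
          (starRingEnd ℂ) (((c n : ℝ) : ℂ) * z ^ n) /
          ((Nf (‖z‖ ^ 2) : ℝ) : ℂ) ∂μ)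
        = ∫ z : ℂ, ((c n ^ 2 : ℝ) : ℂ) *
            ((‖z‖ ^ (2 * (n + 1)) / Nf (‖z‖ ^ 2) : ℝ) : ℂ) ∂μ :=
          integral_congr_ae (Filter.Eventually.of_forall hint)
      _ = ((c n ^ 2 : ℝ) : ℂ) *
            ((∫ z : ℂ, ‖z‖ ^ (2 * (n + 1)) / Nf (‖z‖ ^ 2) ∂μ : ℝ) : ℂ) := by
          rw [integral_const_mul]
          congr 1
          exact integral_ofReal
      _ = ((φ (n + 1) : ℝ) : ℂ) := by
          rw [hmom (n + 1)]
          norm_cast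
          have hqpn : qp (n + 1) = qp n * (1 - q ^ (n + 1)) := by
            rw [hqp, hqp, Finset.prod_range_succ]
          have hX : (0:ℝ) < γ ^ n * qp n := mul_pos (pow_pos hγpos n) (hqppos n)
          have hcsq : c n ^ 2 = q ^ ((n * (n - 1) : ℝ) / 2) * (γ ^ n * qp n)⁻¹ := by
            rw [hc, mul_pow, inv_pow, Real.sq_sqrt hX.le]
            congr 1
            rw [sq, ← Real.rpow_add hq0]
            ring_nf
          have hexp : (((n + 1) * ((n + 1) - 1) / 2 : ℕ) : ℝ) = ((n:ℝ) + 1) * n / 2 := by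
            have he : ((n + 1) * n / 2 : ℕ) * 2 = (n + 1) * n := by
              apply Nat.div_mul_cancel
              have := Nat.even_mul_succ_self n
              exact Even.two_dvd (by rwa [mul_comm] at this)
            simp only [Nat.add_sub_cancel]
            have h2 := congrArg (fun m : ℕ => (m : ℝ)) he
            push_cast at h2
            linarith
          have hq2 : (q ^ ((n + 1) * ((n + 1) - 1) / 2 : ℕ)) = q ^ ((((n:ℝ) + 1) * n) / 2) := by
            rw [← Real.rpow_natCast q (((n + 1) * ((n + 1) - 1) / 2 : ℕ)), hexp]
          have e12 : q ^ ((n * (n - 1) : ℝ) / 2)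
              = q ^ ((((n:ℝ) + 1) * n) / 2) * (q ^ (n:ℕ))⁻¹ := by
            rw [← Real.rpow_natCast q n, ← Real.rpow_neg hq0.le, ← Real.rpow_add hq0]
            ring_nf
          have e4 : q ^ (-((n + 1 : ℕ) : ℝ)) = (q ^ (n:ℕ) * q)⁻¹ := by
            rw [Real.rpow_neg hq0.le]
            congr 1
            push_cast
            rw [Real.rpow_add hq0, Real.rpow_one, Real.rpow_natCast]
          have hlq : l ^ 2 * q ^ lam = γ * (1 - q) * q := by
            rw [hγ, Real.rpow_sub hq0, Real.rpow_one]
            field_simp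
          have hP : q ^ ((((n:ℝ) + 1) * n) / 2) ≠ 0 := (Real.rpow_pos_of_pos hq0 _).ne'
          have hQ : q ^ (n:ℕ) ≠ 0 := pow_ne_zero _ hq0.ne'
          have hγn : γ ≠ 0 := hγpos.ne'
          have hq1n : q - 1 ≠ 0 := by linarith
          have hqpn' : qp n ≠ 0 := (hqppos n).ne'
          rw [hcsq, hqpn, hφ, hq2, e12, e4, hlq, pow_succ γ, pow_succ q]
          field_simp
          ring
  · -- off-diagonal case
    rw [if_neg hnn]
    set F : ℂ → ℂ := fun z => ((‖z‖ ^ 2 : ℝ) : ℂ) * ((c n : ℝ) : ℂ) * z ^ n *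
          (starRingEnd ℂ) (((c n' : ℝ) : ℂ) * z ^ n') /
          ((Nf (‖z‖ ^ 2) : ℝ) : ℂ) with hF
    have hne : ((n:ℝ) - (n':ℝ)) ≠ 0 := sub_ne_zero.2 (by exact_mod_cast hnn)
    set θ : ℝ := Real.pi / ((n:ℝ) - (n':ℝ)) with hθdef
    set w : Circle := Circle.exp θ with hwdef
    set e : ℂ ≃ₗᵢ[ℝ] ℂ := rotation w with hedef
    have hevol : MeasurePreserving e volume volume := e.measurePreserving
    have hemb : MeasurableEmbedding e := e.toHomeomorph.measurableEmbedding
    have heμ : MeasurePreserving e μ μ := by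
      refine ⟨e.continuous.measurable, ?_⟩
      rw [hμ]
      ext s hs
      rw [Measure.map_apply e.continuous.measurable hs,
        withDensity_apply _ (e.continuous.measurable hs), withDensity_apply _ hs,
        ← lintegral_indicator (e.continuous.measurable hs), ← lintegral_indicator hs]
      have hind : ∀ z : ℂ, (⇑e ⁻¹' s).indicator
          (fun z => ENNReal.ofReal (h (‖z‖ ^ 2))) z
          = s.indicator (fun z => ENNReal.ofReal (h (‖z‖ ^ 2))) (e z) := by
        intro z
        have habs : ‖e z‖ = ‖z‖ := by
          simp [hedef, rotation_apply, Circle.norm_coe]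
        by_cases hz : e z ∈ s
        · rw [Set.indicator_of_mem hz, Set.indicator_of_mem (by exact hz), habs]
        · rw [Set.indicator_of_notMem hz, Set.indicator_of_notMem (by exact hz)]
      calc ∫⁻ z, (⇑e ⁻¹' s).indicator (fun z => ENNReal.ofReal (h (‖z‖ ^ 2))) z ∂volume
          = ∫⁻ z, s.indicator (fun z => ENNReal.ofReal (h (‖z‖ ^ 2))) (e z) ∂volume := by
            simp only [hind]
        _ = ∫⁻ z, s.indicator (fun z => ENNReal.ofReal (h (‖z‖ ^ 2))) z ∂volume :=
            hevol.lintegral_comp_emb hemb _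
    have hw : ((w : ℂ)) ^ n * ((starRingEnd ℂ) (w : ℂ)) ^ n' = -1 := by
      have hθ : ((n:ℝ) - (n':ℝ)) * θ = Real.pi := by
        rw [hθdef, mul_div_cancel₀ _ hne]
      have hθ' : ((n:ℂ) - (n':ℂ)) * (θ : ℂ) = (Real.pi : ℂ) := by
        have h2 := congrArg (fun x : ℝ => (x : ℂ)) hθ
        push_cast at h2
        exact h2
      rw [hwdef, Circle.coe_exp, ← Complex.exp_conj, ← Complex.exp_nat_mul,
        ← Complex.exp_nat_mul, ← Complex.exp_add, ← Complex.exp_pi_mul_I]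
      congr 1
      simp only [map_mul, Complex.conj_ofReal, Complex.conj_I]
      linear_combination Complex.I * hθ'
    have hFneg : ∀ z : ℂ, F ((w : ℂ) * z) = -F z := by
      intro z
      have habs : ‖(w : ℂ) * z‖ = ‖z‖ := by
        rw [norm_mul, Circle.norm_coe, one_mul]
      simp only [hF, habs, mul_pow, map_mul, map_pow, Complex.conj_ofReal]
      rw [div_eq_mul_inv, div_eq_mul_inv, ← neg_mul]
      linear_combination (((‖z‖ ^ 2 : ℝ) : ℂ) * ((c n : ℝ) : ℂ) * ((c n' : ℝ) : ℂ) *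
        z ^ n * ((starRingEnd ℂ) z) ^ n' * (((Nf (‖z‖ ^ 2) : ℝ) : ℂ))⁻¹) * hw
    have h1 : ∫ z, F (e z) ∂μ = ∫ z, F z ∂μ := heμ.integral_comp hemb F
    have h2 : ∫ z, F (e z) ∂μ = -∫ z, F z ∂μ := by
      have hcomp : ∀ z : ℂ, F (e z) = -F z := by
        intro z
        rw [show e z = (w : ℂ) * z from rotation_apply w z]
        exact hFneg z
      simp only [hcomp]
      exact integral_neg F
    have h3 : (∫ z, F z ∂μ) = 0 := by
      have h4 := h1.symm.trans h2
      linear_combination h4 / 2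
    exact h3
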